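/- Let G be a finite group with identity e, and let H be a subgroup of G such that G equals the union over all g in G of the conjugates g⁻¹Hg. Then H = G. -/

import Mathlib

/-- **Jordan's theorem.** If `G` is a finite group and `H` a subgroup such that `G` is
the union of the conjugates `g⁻¹ H g` of `H`, then `H = G`. -/
theorem jordan_subgroup_eq_top {G : Type*} [Group G] [Finite G] (H : Subgroup G)
    (h : ∀ x : G, ∃ g : G, g * x * g⁻¹ ∈ H) : H = ⊤ := by
  classical
  cases nonempty_fintype G
  set N := Subgroup.normalizer (H : Set G) with hN
  -- the conjugate `g H g⁻¹` as a finset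
  set f : G → Finset G := fun g => Finset.univ.filter (fun x => g⁻¹ * x * g ∈ H) with hf
  have hconst : ∀ a b : G, a⁻¹ * b ∈ N → f a = f b := by
    intro a b hab
    rw [Subgroup.mem_normalizer_iff] at hab
    ext x
    simp only [hf, Finset.mem_filter, Finset.mem_univ, true_and]
    have heq : (a⁻¹ * b) * (b⁻¹ * x * b) * (a⁻¹ * b)⁻¹ = a⁻¹ * x * a := by group
    constructor
    · intro hx
      refine (hab _).mpr ?_
      rw [heq]; exact hx
    · intro hx
      have := (hab _).mp hx
      rwa [heq] at this
  -- factor through the quotient by the normalizer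
  set F : G ⧸ N → Finset G := Quotient.lift f (fun a b hab => hconst a b
      ((QuotientGroup.leftRel_apply).mp hab)) with hF
  have hFmk : ∀ g : G, F (QuotientGroup.mk g) = f g := fun g => rfl
  set T : Finset (Finset G) := Finset.univ.image F with hT
  have cardH_pos : 0 < Nat.card H := Nat.card_pos
  -- each conjugate has the same cardinality as `H` and contains `1`
  have hcard : ∀ g : G, (f g).card = Nat.card H := by
    intro g
    have himg : f g = Finset.image (fun y => g * y * g⁻¹)
        (Finset.univ.filter (· ∈ H)) := by
      ext x
      simp only [hf, Finset.mem_filter, Finset.mem_univ, true_and, Finset.mem_image]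
      constructor
      · intro hx
        exact ⟨g⁻¹ * x * g, hx, by group⟩
      · rintro ⟨y, hy, rfl⟩
        convert hy using 2
        group
    rw [himg, Finset.card_image_of_injective _ (fun y z hyz => by
      simpa using mul_left_cancel (mul_right_cancel hyz)),
      ← Fintype.card_subtype, Nat.card_eq_fintype_card]
  have hone : ∀ g : G, (1 : G) ∈ f g := by
    intro g
    simp [hf, H.one_mem]
  -- every element lies in some conjugate
  have hcover : (Finset.univ.erase (1 : G)) ⊆ T.biUnion (fun t => t.erase 1) := by
    intro x hx
    obtain ⟨g, hg⟩ := h x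
    refine Finset.mem_biUnion.mpr ⟨f g⁻¹, ?_, ?_⟩
    · exact Finset.mem_image.mpr ⟨QuotientGroup.mk g⁻¹, Finset.mem_univ _, rfl⟩
    · refine Finset.mem_erase.mpr ⟨(Finset.mem_erase.mp hx).1, ?_⟩
      simp only [hf, Finset.mem_filter, Finset.mem_univ, true_and, inv_inv]
      simpa using hg
  -- counting
  have hTcard : T.card ≤ N.index := by
    calc T.card ≤ Fintype.card (G ⧸ N) := by
          simpa [hT] using (Finset.card_image_le (s := Finset.univ) (f := F))
      _ = N.index := by rw [Subgroup.index, Nat.card_eq_fintype_card]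
  have hNle : N.index ≤ H.index := Nat.le_of_dvd
    (Nat.pos_of_ne_zero (Subgroup.index_ne_zero_of_finite))
    (Subgroup.index_dvd_of_le (Subgroup.le_normalizer (H := H)))
  have key : Fintype.card G - 1 ≤ H.index * (Nat.card H - 1) := by
    calc Fintype.card G - 1 = (Finset.univ.erase (1 : G)).card := by
          rw [Finset.card_erase_of_mem (Finset.mem_univ _), Finset.card_univ]
      _ ≤ (T.biUnion (fun t => t.erase 1)).card := Finset.card_le_card hcover
      _ ≤ ∑ t ∈ T, (t.erase 1).card := Finset.card_biUnion_le
      _ ≤ ∑ _t ∈ T, (Nat.card H - 1) := by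
          refine Finset.sum_le_sum fun t ht => ?_
          obtain ⟨q, -, rfl⟩ := Finset.mem_image.mp ht
          induction q using QuotientGroup.induction_on with
          | H g =>
            rw [hFmk, Finset.card_erase_of_mem (hone g), hcard g]
      _ = T.card * (Nat.card H - 1) := by rw [Finset.sum_const, smul_eq_mul]
      _ ≤ H.index * (Nat.card H - 1) :=
          Nat.mul_le_mul_right _ (le_trans hTcard hNle)
  have hmul : H.index * Nat.card H = Nat.card G := H.index_mul_card
  have hsub : H.index * (Nat.card H - 1) = H.index * Nat.card H - H.index := by
    rw [Nat.mul_sub, Nat.mul_one]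
  have hidx_pos : 0 < H.index :=
    Nat.pos_of_ne_zero (Subgroup.index_ne_zero_of_finite)
  have hcardG : Nat.card G = Fintype.card G := Nat.card_eq_fintype_card
  have hGpos : 0 < Fintype.card G := Fintype.card_pos
  rw [hsub, hmul] at key
  have hle : H.index ≤ Nat.card G := Nat.le_of_dvd (by omega) ⟨_, hmul.symm⟩
  have : H.index = 1 := by omega
  exact Subgroup.index_eq_one.mp this
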